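/- arXiv:2601.17945 — 2 statements merged into one kernel-verified Lean document; each statement's English description precedes it below -/
import Mathlib

section
/- Every word w (a finite sequence of distinct positive integers) admits a decomposition w = γ*α₁*⋯*α_k as a concatenation where γ is an increasing word (possibly empty) and each α_i is a hook, and this decomposition is unique. -/
namespace Paper

/-- number of descents of a word -/
def des : List ℕ → ℕ
  | a :: b :: t => (if b < a then 1 else 0) + des (b :: t)
  | _ => 0

/-- number of inversions of a word -/
def inv : List ℕ → ℕ
  | [] => 0
  | a :: t => (t.countP fun x => decide (x < a)) + inv t

/-- a word is (strictly) increasing -/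
def Incr (w : List ℕ) : Prop := w.Chain' (· < ·)

/-- a word is a hook: `a₁ > a₂` and `a₂ < a₃ < ⋯ < a_s`, length ≥ 2 -/
def IsHook : List ℕ → Prop
  | a :: b :: t => b < a ∧ (b :: t).Chain' (· < ·)
  | _ => False

/-- `(γ, hs)` is the hook factorization data of `w` -/
def IsHookFact (w γ : List ℕ) (hs : List (List ℕ)) : Prop :=
  Incr γ ∧ (∀ h ∈ hs, IsHook h) ∧ w = γ ++ hs.flatten

/-- the statistic `lec` computed from the hooks of a factorization -/
def lecVal (hs : List (List ℕ)) : ℕ := (hs.map inv).sum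

/-- one-line word of `σ ∈ S_n`, with entries in `[1..n]` -/
def word {n : ℕ} (σ : Equiv.Perm (Fin n)) : List ℕ :=
  List.ofFn fun i => (σ i : ℕ) + 1

/-- a word `w₁ ⋯ w_ℓ` with maximum in position `c` is a (nontrivial) reverse wave if
`c ≠ ℓ` and `w₁ < ⋯ < w_{c-1} < w_ℓ < w_{ℓ-1} < ⋯ < w_c`. -/
def IsRevWave (w : List ℕ) : Prop :=
  ∃ c, c + 1 < w.length ∧ (w.take c ++ (w.drop c).reverse).Chain' (· < ·)

/-- a word `w₁ ⋯ w_ℓ` with maximum in position `c` is a (nontrivial) wave if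
`c ≠ ℓ` and `w_ℓ < w_{ℓ-1} < ⋯ < w_{c+1} < w₁ < ⋯ < w_c`. -/
def IsWave (w : List ℕ) : Prop :=
  ∃ c, c + 1 < w.length ∧ ((w.drop (c + 1)).reverse ++ w.take (c + 1)).Chain' (· < ·)

/-- the maximal strictly decreasing run starting below `hi` and staying above `lo` -/
def decRun (hi lo : ℕ) : List ℕ → List ℕ
  | [] => []
  | b :: t => if b < hi ∧ lo < b then b :: decRun b lo t else []

def srwAux (lo : ℕ) : List ℕ → List ℕ
  | [] => []
  | [a] => [a]
  | a :: b :: t => if a < b then a :: srwAux a (b :: t) else a :: decRun a lo (b :: t)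

/-- the special reverse wave of a word: the prefix `w₁ ⋯ w_s` where `t` is the position of the
first descent (the whole word if none) and `s ≥ t` is maximal with
`w_t > w_{t+1} > ⋯ > w_s > w_{t-1}` (convention `w₀ = 0`). -/
def srw (w : List ℕ) : List ℕ := srwAux 0 w

/-- the number of special reverse descents: `des (srw w) + χ(w_s > w_{s+1})` -/
def srdes (w : List ℕ) : ℕ :=
  des (srw w) +
    match (srw w).getLast?, (w.drop (srw w).length).head? with
    | some x, some y => if y < x then 1 else 0
    | _, _ => 0

/-- the prefix `w₁ ⋯ w_t` of `w` ending at the position `t` of the first descent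
(the whole word if there is no descent) -/
def incrPrefix : List ℕ → List ℕ
  | [] => []
  | [a] => [a]
  | a :: b :: t => if a < b then a :: incrPrefix (b :: t) else [a]

/-- the special wave `w_r ⋯ w_t ⋯ w_s` of a word -/
def sw (w : List ℕ) : List ℕ :=
  let pre := incrPrefix w
  match w.drop pre.length with
  | [] => w
  | x :: rs =>
    let kept := pre.takeWhile fun u => decide (u < x)
    pre.drop kept.length ++ x :: decRun x (kept.getLastD 0) rs

/-- the word `w \ sw(w) = w₁ ⋯ w_{r-1} w_{s+1} ⋯ w_ℓ` obtained removing the special wave -/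
def swCompl (w : List ℕ) : List ℕ :=
  let pre := incrPrefix w
  match w.drop pre.length with
  | [] => []
  | x :: rs =>
    let kept := pre.takeWhile fun u => decide (u < x)
    kept ++ rs.drop (decRun x (kept.getLastD 0) rs).length

/-- insertion `ins(a,b) = a₁ ⋯ a_x b₁ ⋯ b_q a_{x+1} ⋯ a_p`, where `x` is maximal with
`a₁ < a₂ < ⋯ < a_x < b_q` -/
def ins (a b : List ℕ) : List ℕ :=
  let pfx := (incrPrefix a).takeWhile fun u => decide (u < b.getLastD 0)
  pfx ++ b ++ a.drop pfx.length

/-- the word `ρ = ρ₁ ⋯ ρ_m` (entries in `[1..n]`) associated to an injection `Fin m ↪ Fin n` -/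
def rho {n m : ℕ} (f : Fin m ↪ Fin n) : List ℕ :=
  List.ofFn fun j => (f j : ℕ) + 1

/-- descent number of the pair `(α₀, ρ)`: `des ρ + #{a ∈ α₀ : a > ρ₁}`,
where `α₀ = [n] \ {ρ₁, …, ρ_m}` -/
def desPair (n : ℕ) {m : ℕ} (f : Fin m ↪ Fin n) : ℕ :=
  des (rho f) + ((Finset.Icc 1 n).filter fun a => a ∉ rho f ∧ (rho f).headI < a).card

/-- descent number of the pair `(α₀, ρ)`, with `ρ` given as a list -/
def desPairL (n : ℕ) (ρ : List ℕ) : ℕ :=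
  des ρ + ((Finset.Icc 1 n).filter fun a => a ∉ ρ ∧ ρ.headI < a).card

/-- the map `μ`, sending `ρ` (with complementary set `α₀ = {α₁ < ⋯ < α_{n-k-1}}`) to
`α₁ ⋯ α_{n-k-m-1} α_{n-k-1} α_{n-k-2} ⋯ α_{n-k-m} ρ₁ ⋯ ρ_{k+1}`,
where `m = #{a ∈ α₀ : a > ρ₁}` -/
def mu (n : ℕ) (ρ : List ℕ) : List ℕ :=
  let A := ((Finset.Icc 1 n).filter fun a => a ∉ ρ).sort (· ≤ ·)
  let m := (A.filter fun a => decide (ρ.headI < a)).length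
  (A.take (A.length - m) ++ (A.drop (A.length - m)).reverse) ++ ρ

lemma hook_not_suffix_incr {h l : List ℕ} (hl : l.Chain' (· < ·)) (hs : h <:+ l)
    (hh : IsHook h) : False := by
  have hc : h.Chain' (· < ·) := hl.suffix hs
  match h, hh with
  | a :: b :: t, ⟨h1, _⟩ =>
    have := List.isChain_cons_cons.mp hc
    omega

lemma hook_suffix_eq {h₁ h₂ : List ℕ} (hh1 : IsHook h₁) (hh2 : IsHook h₂)
    (hs : h₁ <:+ h₂) : h₁ = h₂ := by
  match h₂, hh2 with
  | a :: b :: t, ⟨h1, h2⟩ =>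
    rcases List.suffix_cons_iff.mp hs with h | h
    · exact h
    · exact absurd h (fun hsuf => hook_not_suffix_incr h2 hsuf hh1)

lemma uniq : ∀ (hs₁ : List (List ℕ)) (γ₁ w γ₂ : List ℕ) (hs₂ : List (List ℕ)),
    Incr γ₁ → (∀ h ∈ hs₁, IsHook h) → w = γ₁ ++ hs₁.flatten →
    Incr γ₂ → (∀ h ∈ hs₂, IsHook h) → w = γ₂ ++ hs₂.flatten →
    γ₁ = γ₂ ∧ hs₁ = hs₂ := by
  intro hs₁
  induction hs₁ using List.reverseRecOn with
  | nil =>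
    intro γ₁ w γ₂ hs₂ hi1 _ hw1 hi2 hk2 hw2
    rcases List.eq_nil_or_concat hs₂ with rfl | ⟨L, b, rfl⟩
    · simp_all
    · exfalso
      refine hook_not_suffix_incr (l := w) ?_ ?_ (hk2 b (by simp))
      · rw [hw1]; simpa [Incr] using hi1
      · rw [hw2]
        exact ⟨γ₂ ++ L.flatten, by simp⟩
  | append_singleton hs₁' h₁ ih =>
    intro γ₁ w γ₂ hs₂ hi1 hk1 hw1 hi2 hk2 hw2
    rcases List.eq_nil_or_concat hs₂ with rfl | ⟨L, h₂, rfl⟩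
    · exfalso
      refine hook_not_suffix_incr (l := w) ?_ ?_ (hk1 h₁ (by simp))
      · rw [hw2]; simpa [Incr] using hi2
      · rw [hw1]; exact ⟨γ₁ ++ hs₁'.flatten, by simp⟩
    · have hh1 : IsHook h₁ := hk1 h₁ (by simp)
      have hh2 : IsHook h₂ := hk2 h₂ (by simp)
      have hsuf1 : h₁ <:+ w := by rw [hw1]; exact ⟨γ₁ ++ hs₁'.flatten, by simp⟩
      have hsuf2 : h₂ <:+ w := by rw [hw2]; exact ⟨γ₂ ++ L.flatten, by simp⟩
      have heq : h₁ = h₂ := by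
        rcases List.suffix_or_suffix_of_suffix hsuf1 hsuf2 with h | h
        · exact hook_suffix_eq hh1 hh2 h
        · exact (hook_suffix_eq hh2 hh1 h).symm
      subst heq
      have hcanc : γ₁ ++ hs₁'.flatten = γ₂ ++ L.flatten := by
        apply List.append_cancel_right (bs := h₁)
        have e1 : γ₁ ++ hs₁'.flatten ++ h₁ = w := by rw [hw1]; simp
        have e2 : γ₂ ++ L.flatten ++ h₁ = w := by rw [hw2]; simp
        rw [e1, e2]
      obtain ⟨e1, e2⟩ := ih γ₁ (γ₁ ++ hs₁'.flatten) γ₂ L hi1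
        (fun h hm => hk1 h (by simp [hm])) rfl hi2
        (fun h hm => hk2 h (by simp [hm])) hcanc
      exact ⟨e1, by simp [e2]⟩

lemma exist : ∀ n (w : List ℕ), w.length ≤ n → w.Nodup →
    ∃ (γ : List ℕ) (hs : List (List ℕ)),
      Incr γ ∧ (∀ h ∈ hs, IsHook h) ∧ w = γ ++ hs.flatten := by
  intro n
  induction n with
  | zero =>
    intro w hlen _
    have : w = [] := List.length_eq_zero_iff.mp (Nat.le_zero.mp hlen)
    exact ⟨[], [], List.isChain_nil, by simp, by simp [this]⟩
  | succ n ih =>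
    intro w hlen hnd
    by_cases hinc : Incr w
    · exact ⟨w, [], hinc, by simp, by simp⟩
    · -- there is a descent; find the last one
      obtain ⟨j, hjlt, hjdesc, hmax⟩ :
          ∃ j, ∃ (hjlt : j + 1 < w.length),
            w[j+1] < w[j]'(by omega) ∧
            ∀ k, j < k → ∀ (hk1 : k + 1 < w.length), w[k]'(by omega) < w[k+1]'hk1 := by
        have hget : ¬ ∀ (i : ℕ) (h : i < w.length - 1),
            w.get ⟨i, by omega⟩ < w.get ⟨i+1, by omega⟩ :=
          fun h => hinc (List.isChain_iff_getElem.mpr (fun i hi => h i (by omega)))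
        push_neg at hget
        obtain ⟨i₀, hi₀, hnlt⟩ := hget
        set P : ℕ → Prop := fun i => i + 1 < w.length ∧ w.getD (i+1) 0 < w.getD i 0 with hP
        have hPdec : DecidablePred P := fun i => by unfold P; infer_instance
        have hi₀lt : i₀ + 1 < w.length := by omega
        have hPi₀ : P i₀ := by
          refine ⟨hi₀lt, ?_⟩
          rw [List.getD_eq_getElem _ _ hi₀lt, List.getD_eq_getElem _ _ (by omega)]
          have hne : w[i₀+1] ≠ w[i₀] := by
            intro h
            have := (hnd.getElem_inj_iff (hi := hi₀lt) (hj := by omega)).mp h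
            omega
          have : ¬ w[i₀] < w[i₀+1] := by
            simpa [List.get_eq_getElem] using hnlt
          omega
        set j := Nat.findGreatest P w.length with hj
        have hPj : P j := Nat.findGreatest_spec (m := i₀) (by omega) hPi₀
        obtain ⟨hjlt, hjdesc⟩ := hPj
        rw [List.getD_eq_getElem _ _ hjlt, List.getD_eq_getElem _ _ (by omega)] at hjdesc
        refine ⟨j, hjlt, hjdesc, ?_⟩
        intro k hk hk1
        have hnp : ¬ P k := Nat.findGreatest_is_greatest hk (by omega)
        have hne : w[k]'(by omega) ≠ w[k+1]'hk1 := fun h => by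
          have := (hnd.getElem_inj_iff (hi := by omega) (hj := hk1)).mp h
          omega
        have h2 : ¬ (w.getD (k+1) 0 < w.getD k 0) := fun hlt => hnp ⟨hk1, hlt⟩
        rw [List.getD_eq_getElem _ _ hk1, List.getD_eq_getElem _ _ (by omega)] at h2
        omega
      -- the last hook is w.drop j
      have hdropj : w.drop j = w[j] :: w[j+1] :: w.drop (j+2) := by
        rw [List.drop_eq_getElem_cons (by omega : j < w.length),
          List.drop_eq_getElem_cons (by omega : j + 1 < w.length)]
      have hchain : (w.drop (j+1)).Chain' (· < ·) := by
        refine List.isChain_iff_getElem.mpr ?_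
        intro i hi
        simp only [List.get_eq_getElem, List.getElem_drop, List.length_drop] at hi ⊢
        have h1 : j + 1 + i + 1 < w.length := by omega
        have := hmax (j + 1 + i) (by omega) h1
        have e : j + 1 + (i + 1) = j + 1 + i + 1 := by omega
        simp only [e]
        exact this
      have hhook : IsHook (w.drop j) := by
        rw [hdropj]
        refine ⟨hjdesc, ?_⟩
        rw [← List.drop_eq_getElem_cons (by omega : j + 1 < w.length)]
        exact hchain
      -- recurse on the prefix
      obtain ⟨γ, hs, hγ, hhs, heq⟩ := ih (w.take j) (by simp; omega)
        (hnd.sublist (List.take_sublist _ _))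
      refine ⟨γ, hs ++ [w.drop j], hγ, ?_, ?_⟩
      · intro h hm
        rcases List.mem_append.mp hm with h1 | h1
        · exact hhs h h1
        · simp at h1; subst h1; exact hhook
      · rw [List.flatten_append, ← List.append_assoc, ← heq]
        simp


end Paper
/-- every word (finite sequence of distinct positive integers) admits a unique
decomposition `w = γ * α₁ * ⋯ * α_k` where `γ` is increasing (possibly empty) and each `α_i`
is a hook. -/
theorem Paper.statement1 (w : List ℕ) (hnd : w.Nodup) (hpos : ∀ x ∈ w, 0 < x) :
    ∃! p : List ℕ × List (List ℕ),
      Incr p.1 ∧ (∀ h ∈ p.2, IsHook h) ∧ w = p.1 ++ p.2.flatten := by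
  obtain ⟨γ, hs, hγ, hhs, heq⟩ := Paper.exist w.length w le_rfl hnd
  refine ⟨(γ, hs), ⟨hγ, hhs, heq⟩, ?_⟩
  rintro ⟨γ₂, hs₂⟩ ⟨h1, h2, h3⟩
  obtain ⟨e1, e2⟩ := Paper.uniq hs₂ γ₂ w γ hs h1 h2 h3 hγ hhs heq
  simp [Prod.ext_iff, e1, e2]
end

section
/- For every non-empty word w, the special reverse wave srw(w) is a reverse wave (possibly trivial), and it is the maximal prefix of w that is a reverse wave (possibly trivial): every prefix of w that is a (possibly trivial) reverse wave is a prefix of srw(w). -/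
namespace Paper

lemma decRun_prefix (hi lo : ℕ) (l : List ℕ) : decRun hi lo l <+: l := by
  induction l generalizing hi with
  | nil => simp [decRun]
  | cons b t ih =>
    rw [decRun]
    split
    · exact (List.prefix_cons_inj b).mpr (ih b)
    · exact List.nil_prefix

lemma decRun_mem (hi lo : ℕ) (l : List ℕ) : ∀ x ∈ decRun hi lo l, lo < x ∧ x < hi := by
  induction l generalizing hi with
  | nil => simp [decRun]
  | cons b t ih =>
    rw [decRun]
    split
    · rename_i h
      intro x hx
      rcases List.mem_cons.mp hx with rfl | hx
      · exact ⟨h.2, h.1⟩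
      · exact ⟨(ih b x hx).1, (ih b x hx).2.trans h.1⟩
    · simp

lemma decRun_chain (hi lo : ℕ) (l : List ℕ) : (hi :: decRun hi lo l).Chain' (· > ·) := by
  induction l generalizing hi with
  | nil => simp [decRun, List.Chain']
  | cons b t ih =>
    rw [decRun]
    split
    · rename_i h
      exact List.isChain_cons_cons.mpr ⟨h.1, ih b⟩
    · simp [List.Chain']

lemma decRun_max (hi lo : ℕ) (v l : List ℕ) (hc : (hi :: v).Chain' (· > ·))
    (hlo : ∀ x ∈ v, lo < x) (hp : v <+: l) : v <+: decRun hi lo l := by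
  induction l generalizing hi v with
  | nil => rw [List.prefix_nil] at hp; simp [hp]
  | cons b t ih =>
    cases v with
    | nil => exact List.nil_prefix
    | cons x v' =>
      obtain ⟨rfl, hp'⟩ := List.cons_prefix_cons.mp hp
      rw [decRun, if_pos ⟨(List.isChain_cons_cons.mp hc).1, hlo x (by simp)⟩]
      exact (List.prefix_cons_inj x).mpr
        (ih x v' (List.isChain_cons_cons.mp hc).2 (fun y hy => hlo y (List.mem_cons_of_mem _ hy)) hp')

lemma srwAux_gt (lo : ℕ) (w : List ℕ) (h : ∀ y ∈ w.head?, lo < y) :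
    ∀ x ∈ srwAux lo w, lo < x := by
  induction w generalizing lo with
  | nil => simp [srwAux]
  | cons a l ih =>
    have ha : lo < a := h a (by simp)
    cases l with
    | nil => simpa [srwAux] using ha
    | cons b t =>
      rw [srwAux]
      split
      · rename_i hab
        intro x hx
        rcases List.mem_cons.mp hx with rfl | hx
        · exact ha
        · exact ha.trans (ih a (by simpa using hab) x hx)
      · intro x hx
        rcases List.mem_cons.mp hx with rfl | hx
        · exact ha
        · exact (decRun_mem a lo _ x hx).1

lemma wave_perm (l : List ℕ) (c : ℕ) : (l.take c ++ (l.drop c).reverse).Perm l := by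
  calc (l.take c ++ (l.drop c).reverse).Perm (l.take c ++ l.drop c) :=
        List.Perm.append_left _ (List.reverse_perm _)
    _ = l := List.take_append_drop c l

lemma srwAux_main (lo : ℕ) (w : List ℕ) :
    (IsRevWave (srwAux lo w) ∨ Incr (srwAux lo w)) ∧ srwAux lo w <+: w ∧
    ∀ u, u <+: w → (IsRevWave u ∨ Incr u) → (∀ x ∈ u, lo < x) → u <+: srwAux lo w := by
  induction w generalizing lo with
  | nil =>
    refine ⟨Or.inr (by simp [Incr, srwAux, List.Chain']), by simp [srwAux], ?_⟩
    intro u hu _ _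
    rw [List.prefix_nil] at hu
    simp [hu, srwAux]
  | cons a l ih =>
    cases l with
    | nil =>
      exact ⟨Or.inr (by simp [Incr, srwAux, List.Chain']), by simp [srwAux], fun u hu _ _ => by
        simpa [srwAux] using hu⟩
    | cons b t =>
      by_cases hab : a < b
      · -- increasing step
        have heq : srwAux lo (a :: b :: t) = a :: srwAux a (b :: t) := by
          rw [srwAux, if_pos hab]
        obtain ⟨h1, h2, h3⟩ := ih a
        have hgt : ∀ x ∈ srwAux a (b :: t), a < x :=
          srwAux_gt a (b :: t) (by simpa using hab)
        rw [heq]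
        refine ⟨?_, (List.prefix_cons_inj a).mpr h2, ?_⟩
        · rcases h1 with ⟨c, hc, hch⟩ | hI
          · left
            refine ⟨c + 1, by simpa using hc, ?_⟩
            have hsh : (a :: srwAux a (b :: t)).take (c+1) ++
                ((a :: srwAux a (b :: t)).drop (c+1)).reverse
                = a :: ((srwAux a (b :: t)).take c ++ ((srwAux a (b :: t)).drop c).reverse) := by
              simp
            rw [hsh]
            refine List.isChain_cons.mpr ⟨?_, hch⟩
            intro y hy
            have : y ∈ (srwAux a (b :: t)).take c ++ ((srwAux a (b :: t)).drop c).reverse :=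
              List.mem_of_mem_head? hy
            exact hgt y ((wave_perm _ c).mem_iff.mp this)
          · right
            refine List.isChain_cons.mpr ⟨?_, hI⟩
            intro y hy
            exact hgt y (List.mem_of_mem_head? hy)
        · intro u hu hrw hlo
          cases u with
          | nil => exact List.nil_prefix
          | cons x u' =>
            obtain ⟨rfl, hu'⟩ := List.cons_prefix_cons.mp hu
            refine (List.prefix_cons_inj x).mpr (h3 u' hu' ?_ ?_)
            · -- u' is revwave or incr
              rcases hrw with ⟨c, hc, hch⟩ | hI
              · cases c with
                | zero =>
                  exfalso
                  simp only [List.take_zero, List.nil_append, List.drop_zero] at hch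
                  have hd : (x :: u').Chain' (· > ·) := List.isChain_reverse.mp hch
                  cases u' with
                  | nil => simp at hc
                  | cons y u'' =>
                    obtain ⟨rfl, _⟩ := List.cons_prefix_cons.mp hu'
                    exact absurd hab (not_lt.mpr (le_of_lt (List.isChain_cons_cons.mp hd).1))
                | succ c' =>
                  left
                  refine ⟨c', by simpa using hc, ?_⟩
                  have hsh : (x :: u').take (c'+1) ++ ((x :: u').drop (c'+1)).reverse
                      = x :: (u'.take c' ++ (u'.drop c').reverse) := by simp
                  rw [hsh] at hch
                  exact (List.isChain_cons.mp hch).2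
              · exact Or.inr hI.tail
            · -- all elements of u' exceed x = a
              rcases hrw with ⟨c, hc, hch⟩ | hI
              · cases c with
                | zero =>
                  exfalso
                  simp only [List.take_zero, List.nil_append, List.drop_zero] at hch
                  have hd : (x :: u').Chain' (· > ·) := List.isChain_reverse.mp hch
                  cases u' with
                  | nil => simp at hc
                  | cons y u'' =>
                    obtain ⟨rfl, _⟩ := List.cons_prefix_cons.mp hu'
                    exact absurd hab (not_lt.mpr (le_of_lt (List.isChain_cons_cons.mp hd).1))
                | succ c' =>
                  intro z hz
                  have hsh : (x :: u').take (c'+1) ++ ((x :: u').drop (c'+1)).reverse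
                      = x :: (u'.take c' ++ (u'.drop c').reverse) := by simp
                  rw [hsh] at hch
                  have hperm : (u'.take c' ++ (u'.drop c').reverse).Perm u' := by
                    have := wave_perm (x :: u') (c' + 1)
                    rw [hsh] at this
                    exact this.cons_inv
                  have hz' : z ∈ u'.take c' ++ (u'.drop c').reverse := hperm.mem_iff.mpr hz
                  have hpw := List.isChain_iff_pairwise.mp hch
                  exact (List.pairwise_cons.mp hpw).1 z hz'
              · intro z hz
                exact (List.pairwise_cons.mp (List.isChain_iff_pairwise.mp hI)).1 z hz
      · -- descent step
        have heq : srwAux lo (a :: b :: t) = a :: decRun a lo (b :: t) := by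
          rw [srwAux, if_neg hab]
        rw [heq]
        refine ⟨?_, (List.prefix_cons_inj a).mpr (decRun_prefix a lo _), ?_⟩
        · rcases hr : decRun a lo (b :: t) with _ | ⟨y, r'⟩
          · right; simp [Incr, List.Chain']
          · left
            refine ⟨0, by simp, ?_⟩
            simp only [List.take_zero, List.nil_append, List.drop_zero]
            refine List.isChain_reverse.mpr ?_
            exact hr ▸ decRun_chain a lo (b :: t)
        · intro u hu hrw hlo
          cases u with
          | nil => exact List.nil_prefix
          | cons x u' =>
            obtain ⟨rfl, hu'⟩ := List.cons_prefix_cons.mp hu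
            refine (List.prefix_cons_inj x).mpr ?_
            rcases hrw with ⟨c, hc, hch⟩ | hI
            · cases c with
              | zero =>
                simp only [List.take_zero, List.nil_append, List.drop_zero] at hch
                have hd : (x :: u').Chain' (· > ·) := List.isChain_reverse.mp hch
                exact decRun_max x lo u' (b :: t) hd
                  (fun z hz => hlo z (List.mem_cons_of_mem _ hz)) hu'
              | succ c' =>
                exfalso
                cases u' with
                | nil => simp at hc
                | cons y u'' =>
                  obtain ⟨rfl, _⟩ := List.cons_prefix_cons.mp hu'
                  have hsh : (x :: y :: u'').take (c'+1) ++ ((x :: y :: u'').drop (c'+1)).reverse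
                      = x :: ((y :: u'').take c' ++ ((y :: u'').drop c').reverse) := by simp
                  rw [hsh] at hch
                  have hpw := List.isChain_iff_pairwise.mp hch
                  have hby : y ∈ (y :: u'').take c' ++ ((y :: u'').drop c').reverse :=
                    (wave_perm (y :: u'') c').mem_iff.mpr (by simp)
                  exact hab ((List.pairwise_cons.mp hpw).1 y hby)
            · cases u' with
              | nil => exact List.nil_prefix
              | cons y u'' =>
                exfalso
                obtain ⟨rfl, _⟩ := List.cons_prefix_cons.mp hu'
                exact hab (List.isChain_cons_cons.mp hI).1

end Paper
/-- for every non-empty word `w`, the special reverse wave `srw w` is a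
(possibly trivial) reverse wave, and it is the maximal prefix of `w` that is a
(possibly trivial) reverse wave. -/
theorem Paper.statement5 (w : List ℕ) (hw : w ≠ []) (hnd : w.Nodup)
    (hpos : ∀ x ∈ w, 0 < x) :
    (IsRevWave (srw w) ∨ Incr (srw w)) ∧ srw w <+: w ∧
      ∀ u : List ℕ, u <+: w → (IsRevWave u ∨ Incr u) → u <+: srw w := by
  have h := Paper.srwAux_main 0 w
  exact ⟨h.1, h.2.1, fun u hu hrw =>
    h.2.2 u hu hrw fun x hx => hpos x (hu.subset hx)⟩
end
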